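/- Let T ∈ L(E) be a contraction (‖T‖ ≤ 1) and W a nonzero orthogonally complemented T-invariant submodule such that the restriction T|_W : W → W is unitary. Then W reduces T, i.e., W^⊥ is also T-invariant. -/

import Mathlib

open scoped RightActions

/-- The December 2024 Mathlib notion of a Hilbert C⋆-module (right `A`-action via `Aᵐᵒᵖ`),
restated verbatim under a new name since Mathlib's `CStarModule` has changed meaning. -/
class RightCStarModule (A E : Type*) [NonUnitalSemiring A] [StarRing A] [Module ℂ A]
    [AddCommGroup E] [Module ℂ E] [PartialOrder A] [SMul Aᵐᵒᵖ E] [Norm A] [Norm E]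
    extends Inner A E where
  inner_add_right {x} {y} {z} : inner x (y + z) = inner x y + inner x z
  inner_self_nonneg {x} : 0 ≤ inner x x
  inner_self {x} : inner x x = 0 ↔ x = 0
  inner_op_smul_right {a : A} {x y : E} : inner x (y <• a) = inner x y * a
  inner_smul_right_complex {z : ℂ} {x} {y} : inner x (z • y) = z • inner x y
  star_inner x y : star (inner x y) = inner y x
  norm_eq_sqrt_norm_inner_self x : ‖x‖ = Real.sqrt ‖inner x x‖

section

variable {A : Type*} [CStarAlgebra A] [PartialOrder A] [StarOrderedRing A]
variable {E : Type*} [NormedAddCommGroup E] [NormedSpace ℂ E] [SMul Aᵐᵒᵖ E]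
  [RightCStarModule A E] [CompleteSpace E]

local notation "⟪" x ", " y "⟫" => inner (𝕜 := A) x y

/-- `T` is a bounded adjointable `A`-linear operator with adjoint `T'`. -/
def IsAdjointableWith (T T' : E →L[ℂ] E) : Prop :=
  (∀ (a : A) (x : E), T (x <• a) = T x <• a) ∧
  ∀ x y : E, ⟪T x, y⟫ = ⟪x, T' y⟫

/-- The orthogonal complement of a subset of a Hilbert C*-module. -/
def ortho (W : Set E) : Set E := {y | ∀ x ∈ W, ⟪x, y⟫ = (0 : A)}

/-- `W` is orthogonally complemented in `E`. -/
def OrthoComplemented (W : Set E) : Prop :=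
  ∀ z : E, ∃ x ∈ W, ∃ y ∈ ortho (A := A) W, z = x + y

/-- `W` is a closed `A`-submodule of `E`. -/
def IsClosedSubmodule (W : Submodule ℂ E) : Prop :=
  IsClosed (W : Set E) ∧ ∀ (a : A), ∀ x ∈ W, x <• a ∈ W

/-- An orthogonal projection in `L(E)`: an `A`-linear, idempotent, self-adjoint operator. -/
def IsOrthoProjection (P : E →L[ℂ] E) : Prop :=
  (∀ (a : A) (x : E), P (x <• a) = P x <• a) ∧ P.comp P = P ∧
  ∀ x y : E, ⟪P x, y⟫ = ⟪x, P y⟫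

/-- A "compact" operator on a Hilbert C*-module: a member of the closure of the span
of the rank-one operators `z ↦ x ⟨y, z⟩`. -/
def IsCompactOp (K : E →L[ℂ] E) : Prop :=
  K ∈ closure (Submodule.span ℂ
    {S : E →L[ℂ] E | ∃ x y : E, ∀ z : E, S z = x <• ⟪y, z⟫} : Set (E →L[ℂ] E))

/-- `E` is a finitely generated Hilbert `A`-module. -/
def IsFinGen : Prop :=
  ∃ (n : ℕ) (g : Fin n → E), ∀ x : E,
    x ∈ Submodule.span ℂ {y : E | ∃ (i : Fin n) (a : A), y = g i <• a}

/-- `T` is invertible in `L(E)`, the bounded adjointable operators. -/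
def InvertibleInL (T : E →L[ℂ] E) : Prop :=
  ∃ S S' : E →L[ℂ] E, IsAdjointableWith (A := A) S S' ∧ S.comp T = 1 ∧ T.comp S = 1

open Filter Topology

set_option linter.unusedSectionVars false
set_option synthInstance.maxHeartbeats 1000000
set_option maxHeartbeats 1000000

namespace RightCStarModule

lemma inner_add_left {x y z : E} : ⟪x + y, z⟫ = ⟪x, z⟫ + ⟪y, z⟫ := by
  rw [← star_inner z (x + y), inner_add_right, star_add, star_inner, star_inner]

lemma inner_neg_right {x y : E} : ⟪x, -y⟫ = -⟪x, y⟫ := by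
  have h : -y = (-1 : ℂ) • y := by simp
  rw [h, inner_smul_right_complex, neg_one_smul]

@[simp]
lemma inner_zero_right {x : E} : ⟪x, 0⟫ = 0 := by
  have h : (0 : E) = (0 : ℂ) • (0 : E) := by simp
  rw [h, inner_smul_right_complex, zero_smul]

@[simp]
lemma inner_zero_left {x : E} : ⟪0, x⟫ = 0 := by
  rw [← star_inner x 0, inner_zero_right, star_zero]

lemma inner_sub_right {x y z : E} : ⟪x, y - z⟫ = ⟪x, y⟫ - ⟪x, z⟫ := by
  rw [sub_eq_add_neg, inner_add_right, inner_neg_right, ← sub_eq_add_neg]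

lemma inner_sub_left {x y z : E} : ⟪x - y, z⟫ = ⟪x, z⟫ - ⟪y, z⟫ := by
  rw [← star_inner z (x - y), inner_sub_right, star_sub, star_inner, star_inner]

lemma inner_smul_right_real {z : ℝ} {x y : E} : ⟪x, z • y⟫ = z • ⟪x, y⟫ := by
  have h₁ : z • y = (z : ℂ) • y := by simp
  rw [h₁, inner_smul_right_complex]
  simp

lemma inner_smul_left_real {z : ℝ} {x y : E} : ⟪z • x, y⟫ = z • ⟪x, y⟫ := by
  rw [← star_inner y (z • x), inner_smul_right_real, star_smul, star_inner]
  simp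

lemma inner_op_smul_left {a : A} {x y : E} : ⟪x <• a, y⟫ = star a * ⟪x, y⟫ := by
  rw [← star_inner y (x <• a), inner_op_smul_right, star_mul, star_inner]

lemma norm_sq_eq {x : E} : ‖x‖ ^ 2 = ‖⟪x, x⟫‖ := by
  rw [norm_eq_sqrt_norm_inner_self (A := A) x, Real.sq_sqrt (norm_nonneg _)]

lemma inner_swap_mul_inner_le {x y : E} : ⟪y, x⟫ * ⟪x, y⟫ ≤ ‖x‖ ^ 2 • ⟪y, y⟫ := by
  rcases eq_or_ne x 0 with h | h
  · simp [h, inner_zero_right]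
  · have h₁ : ∀ (a : A),
        (0 : A) ≤ ‖x‖ ^ 2 • (star a * a) - ‖x‖ ^ 2 • (star a * ⟪x, y⟫)
                  - ‖x‖ ^ 2 • (⟪y, x⟫ * a) + ‖x‖ ^ 2 • (‖x‖ ^ 2 • ⟪y, y⟫) := fun a => by
      calc (0 : A) ≤ ⟪x <• a - ‖x‖ ^ 2 • y, x <• a - ‖x‖ ^ 2 • y⟫ := by exact inner_self_nonneg
            _ = star a * ⟪x, x⟫ * a - ‖x‖ ^ 2 • (star a * ⟪x, y⟫)
                  - ‖x‖ ^ 2 • (⟪y, x⟫ * a) + ‖x‖ ^ 2 • (‖x‖ ^ 2 • ⟪y, y⟫) := by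
                      simp only [inner_sub_right, inner_op_smul_right, inner_sub_left,
                        inner_op_smul_left, inner_smul_left_real, inner_smul_right_real, sub_mul,
                        smul_mul_assoc, smul_sub, mul_sub, mul_smul_comm, mul_assoc]
                      abel
            _ ≤ ‖x‖ ^ 2 • (star a * a) - ‖x‖ ^ 2 • (star a * ⟪x, y⟫)
                  - ‖x‖ ^ 2 • (⟪y, x⟫ * a) + ‖x‖ ^ 2 • (‖x‖ ^ 2 • ⟪y, y⟫) := by
                      gcongr
                      calc _ ≤ ‖⟪x, x⟫‖ • (star a * a) :=
                          CStarAlgebra.star_left_conjugate_le_norm_smul (star_inner x x)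
                        _ = ‖x‖ ^ 2 • (star a * a) :=
                          congrArg (· • (star a * a)) (norm_sq_eq (A := A) (x := x)).symm
    specialize h₁ ⟪x, y⟫
    simp only [star_inner, sub_self, zero_sub, le_neg_add_iff_add_le, add_zero] at h₁
    have hp : (0 : ℝ) < ‖x‖ ^ 2 := pow_pos (norm_pos_iff.mpr h) _
    rwa [smul_le_smul_iff_of_pos_left hp] at h₁

variable (E) in
lemma norm_inner_le {x y : E} : ‖⟪x, y⟫‖ ≤ ‖x‖ * ‖y‖ := by
  have := calc ‖⟪x, y⟫‖ ^ 2 = ‖⟪y, x⟫ * ⟪x, y⟫‖ := by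
                rw [← star_inner x y, CStarRing.norm_star_mul_self, pow_two]
    _ ≤ ‖‖x‖ ^ 2 • ⟪y, y⟫‖ := by
                refine CStarAlgebra.norm_le_norm_of_nonneg_of_le ?_ inner_swap_mul_inner_le
                rw [← star_inner x y]
                exact star_mul_self_nonneg ⟪x, y⟫
    _ = ‖x‖ ^ 2 * ‖⟪y, y⟫‖ := by simp [norm_smul]
    _ = (‖x‖ * ‖y‖) ^ 2 := by rw [← norm_sq_eq]; ring
  exact (pow_le_pow_iff_left₀ (norm_nonneg _) (by positivity) (by simp)).mp this

lemma continuous_inner : Continuous (fun x : E × E => ⟪x.1, x.2⟫) := by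
  have hb : IsBoundedBilinearMap ℝ (fun x : E × E => ⟪x.1, x.2⟫) :=
    { add_left := fun _ _ _ => inner_add_left
      smul_left := fun _ _ _ => inner_smul_left_real
      add_right := fun _ _ _ => inner_add_right
      smul_right := fun _ _ _ => inner_smul_right_real
      bound := ⟨1, one_pos, fun x y => by rw [one_mul]; exact norm_inner_le E⟩ }
  exact hb.continuous

end RightCStarModule

lemma aux_adj_symm (T T' : E →L[ℂ] E) (h : ∀ x y : E, ⟪T x, y⟫ = ⟪x, T' y⟫) :
    ∀ x y : E, ⟪T' x, y⟫ = ⟪x, T y⟫ := by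
  intro x y
  have := congrArg star (h y x)
  simpa [RightCStarModule.star_inner] using this.symm

lemma aux_core (S S' : E →L[ℂ] E) (h : ∀ x y : E, ⟪S x, y⟫ = ⟪x, S' y⟫)
    (h1 : ‖S‖ < 1) (h2 : ‖S'‖ < 1) (x : E) : ⟪S x, S x⟫ ≤ ⟪x, x⟫ := by
  set B : E →L[ℂ] E := S' * S with hB
  have hBapp : ∀ u : E, B u = S' (S u) := fun u => rfl
  have hBsa : ∀ u v : E, ⟪B u, v⟫ = ⟪u, B v⟫ := by
    intro u v
    have e1 : ⟪B u, v⟫ = ⟪S u, S v⟫ := by rw [hBapp, aux_adj_symm S S' h]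
    have e2 : ⟪u, B v⟫ = ⟪S u, S v⟫ := by rw [hBapp, ← h]
    rw [e1, e2]
  have hrnn : (0:ℝ) ≤ ‖B‖ := norm_nonneg _
  have hr : ‖B‖ < 1 :=
    lt_of_le_of_lt (norm_mul_le S' S) (by nlinarith [norm_nonneg S, norm_nonneg S'])
  set r := ‖B‖ with hrdef
  set ρ : ℝ := 1 - Real.sqrt (1 - r) with hρdef
  have hs_sq : Real.sqrt (1 - r) ^ 2 = 1 - r := Real.sq_sqrt (by linarith)
  have hs_nn : 0 ≤ Real.sqrt (1 - r) := Real.sqrt_nonneg _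
  have hs_le : Real.sqrt (1 - r) ≤ 1 := by nlinarith
  have hs_pos : 0 < Real.sqrt (1 - r) := Real.sqrt_pos.mpr (by linarith)
  have hρ0 : 0 ≤ ρ := by rw [hρdef]; linarith
  have hρ1 : ρ < 1 := by rw [hρdef]; linarith
  have hρρ : ρ * ρ + r = 2 * ρ := by rw [hρdef]; nlinarith
  have hhalf : ‖(2⁻¹:ℝ)‖ = 2⁻¹ := by rw [Real.norm_eq_abs]; norm_num
  set F : (E →L[ℂ] E) → (E →L[ℂ] E) := fun Y => (2⁻¹ : ℝ) • (B + Y * Y) with hF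
  set seq : ℕ → (E →L[ℂ] E) := fun n => F^[n] 0 with hseq
  have hseq_succ : ∀ n, seq (n+1) = F (seq n) := fun n => Function.iterate_succ_apply' F n 0
  have hseq0 : seq 0 = 0 := rfl
  have hFeq : ∀ Z : E →L[ℂ] E, F Z = (2⁻¹ : ℝ) • (B + Z * Z) := fun Z => rfl
  have hnormF : ∀ Z : E →L[ℂ] E, ‖F Z‖ ≤ 2⁻¹ * (r + ‖Z‖ * ‖Z‖) := by
    intro Z
    rw [hFeq]
    have hZ : ‖B + Z * Z‖ ≤ r + ‖Z‖ * ‖Z‖ :=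
      le_trans (norm_add_le _ _) (by gcongr; exact norm_mul_le Z Z)
    calc ‖(2⁻¹ : ℝ) • (B + Z * Z)‖ ≤ ‖(2⁻¹:ℝ)‖ * ‖B + Z * Z‖ :=
          ContinuousLinearMap.opNorm_smul_le _ _
      _ = 2⁻¹ * ‖B + Z * Z‖ := by rw [hhalf]
      _ ≤ 2⁻¹ * (r + ‖Z‖ * ‖Z‖) := by linarith
  have hbound : ∀ n, ‖seq n‖ ≤ ρ := by
    intro n; induction n with
    | zero => rw [hseq0]; simpa using hρ0
    | succ n ih =>
      rw [hseq_succ]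
      calc ‖F (seq n)‖ ≤ 2⁻¹ * (r + ‖seq n‖ * ‖seq n‖) := hnormF _
        _ ≤ 2⁻¹ * (r + ρ * ρ) := by nlinarith [norm_nonneg (seq n)]
        _ = ρ := by linarith
  have hd : ∀ n, ‖seq (n+1) - seq n‖ ≤ ρ ^ n * ρ := by
    intro n; induction n with
    | zero =>
      have e : seq 1 - seq 0 = (2⁻¹ : ℝ) • B := by
        rw [hseq_succ, hseq0, hFeq]
        simp
      rw [e, pow_zero, one_mul]
      calc ‖(2⁻¹ : ℝ) • B‖ ≤ ‖(2⁻¹:ℝ)‖ * ‖B‖ := ContinuousLinearMap.opNorm_smul_le _ _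
        _ = 2⁻¹ * r := by rw [hhalf]
        _ ≤ ρ := by nlinarith
    | succ n ih =>
      have key : seq (n+2) - seq (n+1) =
          (2⁻¹ : ℝ) • (seq (n+1) * (seq (n+1) - seq n) + (seq (n+1) - seq n) * seq n) := by
        rw [hseq_succ (n+1), hseq_succ n, hFeq, hFeq, ← smul_sub]
        congr 1
        noncomm_ring
      have hb1 := hbound (n+1)
      have hb0 := hbound n
      have e1 : ‖seq (n+1) * (seq (n+1) - seq n)‖ ≤ ρ * (ρ ^ n * ρ) := by
        refine le_trans (norm_mul_le _ _) ?_
        have := norm_nonneg (seq (n+1) - seq n)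
        nlinarith [pow_nonneg hρ0 n]
      have e2 : ‖(seq (n+1) - seq n) * seq n‖ ≤ (ρ ^ n * ρ) * ρ := by
        refine le_trans (norm_mul_le _ _) ?_
        have := norm_nonneg (seq (n+1) - seq n)
        nlinarith [pow_nonneg hρ0 n]
      rw [key]
      refine le_trans (ContinuousLinearMap.opNorm_smul_le _ _) ?_
      rw [hhalf]
      have h12 : ‖seq (n+1) * (seq (n+1) - seq n) + (seq (n+1) - seq n) * seq n‖ ≤
          ρ * (ρ ^ n * ρ) + (ρ ^ n * ρ) * ρ :=
        (norm_add_le _ _).trans (add_le_add e1 e2)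
      refine le_trans (mul_le_mul_of_nonneg_left h12 (by norm_num)) (le_of_eq (by ring))
  have hcauchy : CauchySeq seq := by
    refine cauchySeq_of_le_geometric ρ ρ hρ1 fun n => ?_
    rw [dist_eq_norm, norm_sub_rev]
    calc ‖seq (n+1) - seq n‖ ≤ ρ ^ n * ρ := hd n
      _ = ρ * ρ ^ n := mul_comm _ _
  obtain ⟨Y, hYlim⟩ := cauchySeq_tendsto_of_complete hcauchy
  have hFc : Continuous F := by
    rw [hF]
    exact ((continuous_const.add ((continuous_id (X := E →L[ℂ] E)).mul continuous_id))).const_smul (2⁻¹ : ℝ)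
  have hfix : (2⁻¹ : ℝ) • (B + Y * Y) = Y := by
    have t1 : Tendsto (fun n => seq (n+1)) atTop (𝓝 Y) := hYlim.comp (tendsto_add_atTop_nat 1)
    have t2 : Tendsto (fun n => F (seq n)) atTop (𝓝 (F Y)) := (hFc.tendsto Y).comp hYlim
    have e : (fun n => F (seq n)) = fun n => seq (n+1) := funext fun n => (hseq_succ n).symm
    rw [e] at t2
    have hfy : F Y = Y := tendsto_nhds_unique t2 t1
    rw [hFeq] at hfy
    exact hfy
  have happly : ∀ u : E, Tendsto (fun n => seq n u) atTop (𝓝 (Y u)) := by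
    intro u
    exact ((ContinuousLinearMap.apply ℂ E u).continuous.tendsto Y).comp hYlim
  have hsa : ∀ n, ∀ u v : E, ⟪seq n u, v⟫ = ⟪u, seq n v⟫ := by
    intro n; induction n with
    | zero => intro u v; rw [hseq0]; simp
    | succ n ih =>
      intro u v
      have appeq : ∀ w : E, seq (n+1) w = (2⁻¹ : ℝ) • (B w + seq n (seq n w)) := by
        intro w
        rw [hseq_succ, hFeq]
        simp [ContinuousLinearMap.mul_apply]
      rw [appeq u, appeq v, RightCStarModule.inner_smul_left_real, RightCStarModule.inner_smul_right_real,
        RightCStarModule.inner_add_left, RightCStarModule.inner_add_right, hBsa, ih, ih]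
  have hYsa : ∀ u v : E, ⟪Y u, v⟫ = ⟪u, Y v⟫ := by
    intro u v
    have l1 : Tendsto (fun n => ⟪seq n u, v⟫) atTop (𝓝 ⟪Y u, v⟫) :=
      (RightCStarModule.continuous_inner.tendsto (Y u, v)).comp
        ((happly u).prodMk_nhds tendsto_const_nhds)
    have l2 : Tendsto (fun n => ⟪u, seq n v⟫) atTop (𝓝 ⟪u, Y v⟫) :=
      (RightCStarModule.continuous_inner.tendsto (u, Y v)).comp
        (tendsto_const_nhds.prodMk_nhds (happly v))
    have e : (fun n => ⟪seq n u, v⟫) = fun n => ⟪u, seq n v⟫ := funext fun n => hsa n u v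
    rw [e] at l1
    exact tendsto_nhds_unique l1 l2
  have h2Y : (2:ℝ) • Y = B + Y * Y := by
    calc (2:ℝ) • Y = (2:ℝ) • ((2⁻¹:ℝ) • (B + Y*Y)) := by rw [hfix]
      _ = B + Y*Y := by rw [smul_smul]; norm_num
  have key : (1 - Y) * (1 - Y) = 1 - B := by
    calc (1 - Y) * (1 - Y) = 1 - (Y + Y) + Y * Y := by noncomm_ring
      _ = 1 - ((2:ℝ) • Y) + Y*Y := by rw [two_smul]
      _ = 1 - (B + Y*Y) + Y*Y := by rw [h2Y]
      _ = 1 - B := by abel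
  have hpos : (0:A) ≤ ⟪(1 - Y) x, (1 - Y) x⟫ := RightCStarModule.inner_self_nonneg
  have hsub : ∀ u v : E, ⟪(1 - Y) u, v⟫ = ⟪u, (1 - Y) v⟫ := by
    intro u v
    simp only [ContinuousLinearMap.sub_apply, ContinuousLinearMap.one_apply,
      RightCStarModule.inner_sub_left, RightCStarModule.inner_sub_right, hYsa u v]
  have hsa1 : ⟪(1 - Y) x, (1 - Y) x⟫ = ⟪x, ((1 - Y) * (1 - Y)) x⟫ := by
    rw [ContinuousLinearMap.mul_apply]
    exact hsub x ((1 - Y) x)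
  rw [hsa1, key] at hpos
  have hBx : ((1 - B) x) = x - S' (S x) := by
    simp [ContinuousLinearMap.sub_apply, hBapp]
  rw [hBx, RightCStarModule.inner_sub_right, ← h] at hpos
  exact sub_nonneg.mp hpos

lemma aux_adj_norm_le (T T' : E →L[ℂ] E) (h : ∀ x y : E, ⟪T x, y⟫ = ⟪x, T' y⟫)
    (hn : ‖T‖ ≤ 1) : ‖T'‖ ≤ 1 := by
  refine T'.opNorm_le_bound one_pos.le fun y => ?_
  rw [one_mul]
  have hsq : ‖T' y‖ ^ 2 = ‖⟪T' y, T' y⟫‖ := RightCStarModule.norm_sq_eq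
  have h2 : ⟪T' y, T' y⟫ = ⟪T (T' y), y⟫ := (h (T' y) y).symm
  have h3 : ‖⟪T (T' y), y⟫‖ ≤ ‖T (T' y)‖ * ‖y‖ := RightCStarModule.norm_inner_le E
  have h5 : ‖T' y‖ ^ 2 ≤ ‖T' y‖ * ‖y‖ := by
    rw [hsq, h2]
    have h4 := T.le_of_opNorm_le hn (T' y)
    calc ‖⟪T (T' y), y⟫‖ ≤ ‖T (T' y)‖ * ‖y‖ := h3
      _ ≤ ‖T' y‖ * ‖y‖ := by nlinarith [norm_nonneg y, norm_nonneg (T' y)]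
  rcases (norm_nonneg (T' y)).eq_or_lt with h0 | h0
  · rw [← h0]; exact norm_nonneg y
  · nlinarith

lemma aux_contract (T T' : E →L[ℂ] E) (h : ∀ x y : E, ⟪T x, y⟫ = ⟪x, T' y⟫)
    (h1 : ‖T‖ ≤ 1) (h2 : ‖T'‖ ≤ 1) (x : E) : ⟪T x, T x⟫ ≤ ⟪x, x⟫ := by
  have key : ∀ n : ℕ, ((1 - ((n:ℝ)+1)⁻¹) * (1 - ((n:ℝ)+1)⁻¹)) • ⟪T x, T x⟫ ≤ ⟪x, x⟫ := by
    intro n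
    set t : ℝ := 1 - ((n:ℝ)+1)⁻¹ with ht
    have hn0 : (0:ℝ) < (n:ℝ)+1 := by positivity
    have hinvle : ((n:ℝ)+1)⁻¹ ≤ 1 := by
      refine inv_le_one_of_one_le₀ ?_
      linarith [(Nat.cast_nonneg n : (0:ℝ) ≤ (n:ℝ))]
    have hinvpos : (0:ℝ) < ((n:ℝ)+1)⁻¹ := by positivity
    have htnn : 0 ≤ t := by rw [ht]; linarith
    have htlt : t < 1 := by rw [ht]; linarith
    have htabs : ‖t‖ = t := by rw [Real.norm_eq_abs, abs_of_nonneg htnn]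
    have hSn : ‖t • T‖ < 1 := by
      calc ‖t • T‖ ≤ ‖t‖ * ‖T‖ := ContinuousLinearMap.opNorm_smul_le _ _
        _ < 1 := by rw [htabs]; nlinarith [norm_nonneg T]
    have hSn' : ‖t • T'‖ < 1 := by
      calc ‖t • T'‖ ≤ ‖t‖ * ‖T'‖ := ContinuousLinearMap.opNorm_smul_le _ _
        _ < 1 := by rw [htabs]; nlinarith [norm_nonneg T']
    have hadj : ∀ u v : E, ⟪(t • T) u, v⟫ = ⟪u, (t • T') v⟫ := by
      intro u v
      rw [ContinuousLinearMap.smul_apply, ContinuousLinearMap.smul_apply,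
        RightCStarModule.inner_smul_left_real, RightCStarModule.inner_smul_right_real, h]
    have hcore := aux_core (t • T) (t • T') hadj hSn hSn' x
    calc (t*t) • ⟪T x, T x⟫ = ⟪(t • T) x, (t • T) x⟫ := by
          rw [ContinuousLinearMap.smul_apply, RightCStarModule.inner_smul_left_real,
            RightCStarModule.inner_smul_right_real, smul_smul]
      _ ≤ ⟪x,x⟫ := hcore
  have h0 : Tendsto (fun n : ℕ => ((n:ℝ)+1)⁻¹) atTop (𝓝 0) := by
    simpa [one_div] using tendsto_one_div_add_atTop_nhds_zero_nat (𝕜 := ℝ)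
  have ht1 : Tendsto (fun n : ℕ => 1 - ((n:ℝ)+1)⁻¹) atTop (𝓝 1) := by
    have := h0.const_sub (1:ℝ)
    simpa using this
  have hlim : Tendsto (fun n : ℕ => ((1 - ((n:ℝ)+1)⁻¹) * (1 - ((n:ℝ)+1)⁻¹)) • ⟪T x, T x⟫)
      atTop (𝓝 ⟪T x, T x⟫) := by
    have hm : Tendsto (fun n : ℕ => (1 - ((n:ℝ)+1)⁻¹) * (1 - ((n:ℝ)+1)⁻¹)) atTop (𝓝 1) := by
      simpa using ht1.mul ht1
    simpa using hm.smul_const ⟪T x, T x⟫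
  exact le_of_tendsto hlim (Eventually.of_forall key)

/-- If `T` is a contraction, `W` is a nonzero orthogonally complemented `T`-invariant
submodule, and the restriction `T|_W` is unitary, then `W` reduces `T`. -/
theorem stmt15 (T T' : E →L[ℂ] E) (hT : IsAdjointableWith (A := A) T T')
    (hnorm : ‖T‖ ≤ 1) (W : Submodule ℂ E) (hWcl : IsClosedSubmodule (A := A) W)
    (hWc : OrthoComplemented (A := A) (W : Set E)) (hW0 : W ≠ ⊥)
    (hinv : ∀ x ∈ W, T x ∈ W)
    (hiso : ∀ x ∈ W, ∀ y ∈ W, ⟪T x, T y⟫ = ⟪x, y⟫)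
    (hsurj : ∀ y ∈ W, ∃ x ∈ W, T x = y) :
    ∀ y ∈ ortho (A := A) (W : Set E), T y ∈ ortho (A := A) (W : Set E) := by
  intro y hy x hx
  obtain ⟨u, hu, hTu⟩ := hsurj x hx
  have hadj := hT.2
  have hT'n : ‖T'‖ ≤ 1 := aux_adj_norm_le T T' hadj hnorm
  have hadj' : ∀ a b : E, ⟪T' a, b⟫ = ⟪a, T b⟫ := aux_adj_symm T T' hadj
  have hle : ⟪T' x, T' x⟫ ≤ ⟪x, x⟫ := aux_contract T' T hadj' hT'n hnorm x
  have e1 : ⟪u, T' x⟫ = ⟪x, x⟫ := by rw [← hadj u x, hTu]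
  have e2 : ⟪T' x, u⟫ = ⟪x, x⟫ := by
    calc ⟪T' x, u⟫ = star ⟪u, T' x⟫ := (RightCStarModule.star_inner u (T' x)).symm
      _ = star ⟪x, x⟫ := by rw [e1]
      _ = ⟪x, x⟫ := RightCStarModule.star_inner x x
  have e3 : ⟪u, u⟫ = ⟪x, x⟫ := by rw [← hiso u hu u hu, hTu]
  have hzero : ⟪T' x - u, T' x - u⟫ = ⟪T' x, T' x⟫ - ⟪x, x⟫ := by
    rw [RightCStarModule.inner_sub_left, RightCStarModule.inner_sub_right,
      RightCStarModule.inner_sub_right, e1, e2, e3]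
    abel
  have hz0 : ⟪T' x - u, T' x - u⟫ = 0 :=
    le_antisymm (by rw [hzero]; exact sub_nonpos.mpr hle) RightCStarModule.inner_self_nonneg
  have hTx : T' x = u := sub_eq_zero.mp (RightCStarModule.inner_self.mp hz0)
  have hTyx : ⟪T y, x⟫ = 0 := by
    rw [hadj y x, hTx, ← RightCStarModule.star_inner, hy u hu, star_zero]
  calc ⟪x, T y⟫ = star ⟪T y, x⟫ := (RightCStarModule.star_inner _ _).symm
    _ = 0 := by rw [hTyx, star_zero]

end
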